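/- Let $n\ge 1$, let $\alpha$ be the unique solution of $\tan(\alpha\ln(n+1))+2\alpha=0$ in the interval $(\pi/(2\ln(n+1)),\,\pi/\ln(n+1))$, let $h(x)=x^{-1/2}\big(2\alpha\cos(\alpha\ln x)+\sin(\alpha\ln x)\big)$ for $1\le x\le n+1$, and set $a_k=\int_k^{k+1} h(x)\,dx$ for $k=1,\dots,n$. Then $\sum_{k=1}^{n}\Big(\frac{1}{k}\sum_{j=1}^{k}a_j\Big)^2 \ge \frac{4}{1+4\alpha^2}\sum_{k=1}^{n}a_k^2$. -/

import Mathlib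

open Real MeasureTheory Finset

lemma hardy_rpow_half {x : ℝ} (hx : 0 < x) : x ^ (-(1:ℝ)/2) = 1 / Real.sqrt x := by
  rw [show (-(1:ℝ)/2) = -(1/2) by ring, Real.rpow_neg hx.le, ← Real.sqrt_eq_rpow]
  simp

lemma hardyH_deriv (α : ℝ) {x : ℝ} (hx : 0 < x) :
    HasDerivAt (fun y => 2 * Real.sqrt y * Real.sin (α * Real.log y))
      (x ^ (-(1:ℝ)/2) * (2 * α * Real.cos (α * Real.log x) + Real.sin (α * Real.log x))) x := by
  have hlog : HasDerivAt (fun y : ℝ => α * Real.log y) (α / x) x := by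
    simpa [mul_comm, div_eq_mul_inv] using ((Real.hasDerivAt_log hx.ne').const_mul α)
  have hsin : HasDerivAt (fun y : ℝ => Real.sin (α * Real.log y))
      (Real.cos (α * Real.log x) * (α / x)) x := (Real.hasDerivAt_sin _).comp x hlog
  have hsqrt : HasDerivAt (fun y : ℝ => 2 * Real.sqrt y) (2 * (1 / (2 * Real.sqrt x))) x :=
    (Real.hasDerivAt_sqrt hx.ne').const_mul 2
  have := hsqrt.mul hsin
  refine this.congr_deriv ?_; symm
  have hs : Real.sqrt x ≠ 0 := (Real.sqrt_pos.mpr hx).ne'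
  rw [hardy_rpow_half hx]
  have hsq : Real.sqrt x * Real.sqrt x = x := Real.mul_self_sqrt hx.le
  field_simp
  linear_combination (-(2*α*Real.cos (α*Real.log x))) * hsq

lemma hardyG_deriv (α : ℝ) (hα : α ≠ 0) {x : ℝ} (hx : 0 < x) :
    HasDerivAt (fun y => 2 * Real.log y - Real.sin (2 * (α * Real.log y)) / α)
      (4 * Real.sin (α * Real.log x) ^ 2 / x) x := by
  have hlog : HasDerivAt (fun y : ℝ => 2 * (α * Real.log y)) (2 * α / x) x := by
    simpa [mul_comm, mul_assoc, div_eq_mul_inv, mul_left_comm] using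
      ((Real.hasDerivAt_log hx.ne').const_mul (2 * α))
  have hsin : HasDerivAt (fun y : ℝ => Real.sin (2 * (α * Real.log y)))
      (Real.cos (2 * (α * Real.log x)) * (2 * α / x)) x := (Real.hasDerivAt_sin _).comp x hlog
  have h2log : HasDerivAt (fun y : ℝ => 2 * Real.log y) (2 / x) x := by
    simpa [div_eq_mul_inv, mul_comm] using ((Real.hasDerivAt_log hx.ne').const_mul 2)
  have := h2log.sub (hsin.div_const α)
  refine this.congr_deriv ?_; symm
  rw [Real.cos_two_mul]
  have hpy := Real.sin_sq_add_cos_sq (α * Real.log x)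
  field_simp
  linear_combination 4 * hpy

lemma hardyF_deriv (α : ℝ) (hα : α ≠ 0) {x : ℝ} (hx : 0 < x) :
    HasDerivAt (fun y => ((1 + 4*α^2) * (α * Real.log y) / 2
        + (4*α^2 - 1) * Real.sin (2 * (α * Real.log y)) / 4
        + 2 * α * Real.sin (α * Real.log y) ^ 2) / α)
      ((2 * α * Real.cos (α * Real.log x) + Real.sin (α * Real.log x)) ^ 2 / x) x := by
  have hlog : HasDerivAt (fun y : ℝ => α * Real.log y) (α / x) x := by
    simpa [mul_comm, div_eq_mul_inv] using ((Real.hasDerivAt_log hx.ne').const_mul α)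
  have hlog2 : HasDerivAt (fun y : ℝ => 2 * (α * Real.log y)) (2 * (α / x)) x := hlog.const_mul 2
  have hsin2 : HasDerivAt (fun y : ℝ => Real.sin (2 * (α * Real.log y)))
      (Real.cos (2 * (α * Real.log x)) * (2 * (α / x))) x := (Real.hasDerivAt_sin _).comp x hlog2
  have hsin : HasDerivAt (fun y : ℝ => Real.sin (α * Real.log y))
      (Real.cos (α * Real.log x) * (α / x)) x := (Real.hasDerivAt_sin _).comp x hlog
  have hsinsq : HasDerivAt (fun y : ℝ => Real.sin (α * Real.log y) ^ 2)
      (2 * Real.sin (α * Real.log x) * (Real.cos (α * Real.log x) * (α / x))) x := by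
    have := hsin.pow 2
    norm_num at this
    exact this
  have h1 := ((hlog.const_mul ((1 + 4*α^2))).div_const 2).add
      ((hsin2.const_mul ((4*α^2 - 1))).div_const 4)
  have h2 := (h1.add (hsinsq.const_mul (2 * α))).div_const α
  refine h2.congr_deriv ?_; symm
  rw [Real.cos_two_mul]
  have hpy := Real.sin_sq_add_cos_sq (α * Real.log x)
  field_simp
  linear_combination 8 * hpy

lemma hardy_pos (α T : ℝ) (hα : 0 < α) (hT1 : π/2 < T) (hT2 : T < π)
    (hroot : Real.tan T + 2 * α = 0) {t : ℝ} (ht0 : 0 ≤ t) (htT : t ≤ T) :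
    0 ≤ 2 * α * Real.cos t + Real.sin t := by
  rcases le_or_gt t (π/2) with hc | hc
  · have hcos : 0 ≤ Real.cos t := Real.cos_nonneg_of_mem_Icc ⟨by linarith [Real.pi_pos], hc⟩
    have hsin : 0 ≤ Real.sin t := Real.sin_nonneg_of_nonneg_of_le_pi ht0 (by linarith [Real.pi_pos])
    positivity
  · have hcost : Real.cos t < 0 := Real.cos_neg_of_pi_div_two_lt_of_lt hc (by linarith [Real.pi_pos])
    have htan : Real.tan t ≤ Real.tan T := by
      rcases eq_or_lt_of_le htT with rfl | hlt
      · exact le_refl _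
      · have e1 : Real.tan (t - π) = Real.tan t := Real.tan_periodic.sub_eq t
        have e2 : Real.tan (T - π) = Real.tan T := Real.tan_periodic.sub_eq T
        rw [← e1, ← e2]
        exact le_of_lt (Real.tan_lt_tan_of_lt_of_lt_pi_div_two (by linarith) (by linarith)
          (by linarith))
    rw [Real.tan_eq_sin_div_cos] at htan
    have h2 : Real.tan T = -(2*α) := by linarith
    rw [h2, div_le_iff_of_neg hcost] at htan
    linarith

lemma hardy_sinT (α T : ℝ) (hT1 : π/2 < T) (hT2 : T < π)
    (hroot : Real.tan T + 2 * α = 0) : Real.sin T = -(2*α) * Real.cos T := by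
  have hcost : Real.cos T < 0 := Real.cos_neg_of_pi_div_two_lt_of_lt hT1 (by linarith [Real.pi_pos])
  have := Real.tan_eq_sin_div_cos T
  have h2 : Real.tan T = -(2*α) := by linarith
  rw [h2, eq_comm, div_eq_iff hcost.ne] at this
  linarith

lemma hardy_cs (f : ℝ → ℝ) (k : ℝ) (hf : ContinuousOn f (Set.Icc k (k+1))) :
    (∫ x in k..(k+1), f x) ^ 2 ≤ ∫ x in k..(k+1), (f x) ^ 2 := by
  have hk : k ≤ k + 1 := by linarith
  have huIcc : Set.uIcc k (k+1) = Set.Icc k (k+1) := Set.uIcc_of_le hk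
  have hint : IntervalIntegrable f volume k (k+1) := (huIcc ▸ hf).intervalIntegrable
  have hint2 : IntervalIntegrable (fun x => (f x)^2) volume k (k+1) :=
    (huIcc ▸ (hf.pow 2)).intervalIntegrable
  set m := ∫ x in k..(k+1), f x with hm
  have h0 : 0 ≤ ∫ x in k..(k+1), (f x - m)^2 :=
    intervalIntegral.integral_nonneg hk (fun u _ => sq_nonneg _)
  have hexp : ∫ x in k..(k+1), (f x - m)^2
      = (∫ x in k..(k+1), (f x)^2) - 2*m*m + m^2 * (k+1-k) := by
    have : ∀ x, (f x - m)^2 = (f x)^2 - (2*m) * f x + m^2 := by intro x; ring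
    simp_rw [this]
    rw [intervalIntegral.integral_add (hint2.sub (hint.const_mul (2*m)))
        intervalIntegrable_const,
      intervalIntegral.integral_sub hint2 (hint.const_mul (2*m)),
      intervalIntegral.integral_const_mul, intervalIntegral.integral_const]
    simp [hm]
  rw [hexp] at h0
  nlinarith [h0]

theorem discrete_hardy_almost_extremal (n : ℕ) (hn : 1 ≤ n) (α : ℝ)
    (hα : α ∈ Set.Ioo (π / (2 * Real.log (n + 1))) (π / Real.log (n + 1)))
    (hroot : Real.tan (α * Real.log (n + 1)) + 2 * α = 0)
    (h : ℝ → ℝ)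
    (hh : ∀ x ∈ Set.Icc (1 : ℝ) (n + 1),
      h x = x ^ (-(1 : ℝ) / 2) *
        (2 * α * Real.cos (α * Real.log x) + Real.sin (α * Real.log x)))
    (a : ℕ → ℝ) (ha : ∀ k, 1 ≤ k → k ≤ n → a k = ∫ x in (k : ℝ)..((k : ℝ) + 1), h x) :
    ∑ k ∈ Finset.Icc 1 n, ((1 / (k : ℝ)) * ∑ j ∈ Finset.Icc 1 k, a j) ^ 2
      ≥ (4 / (1 + 4 * α ^ 2)) * ∑ k ∈ Finset.Icc 1 n, (a k) ^ 2 := by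
  obtain ⟨hα1, hα2⟩ := hα
  have hπ := Real.pi_pos
  have hN1 : (1:ℝ) < (n:ℝ) + 1 := by
    have : (1:ℝ) ≤ (n:ℝ) := by exact_mod_cast hn
    linarith
  have hL : 0 < Real.log ((n:ℝ) + 1) := Real.log_pos hN1
  have hα0 : 0 < α := lt_trans (by positivity) hα1
  have hT1 : π/2 < α * Real.log ((n:ℝ) + 1) := by
    have h1 : π < α * (2 * Real.log ((n:ℝ)+1)) := (div_lt_iff₀ (by positivity)).mp hα1
    nlinarith
  have hT2 : α * Real.log ((n:ℝ) + 1) < π := (lt_div_iff₀ hL).mp hα2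
  set N : ℝ := (n:ℝ) + 1 with hNdef
  set T : ℝ := α * Real.log N with hTdef
  set H : ℝ → ℝ := fun x => 2 * Real.sqrt x * Real.sin (α * Real.log x) with hHdef
  -- basic membership
  have hmemT : ∀ x : ℝ, 1 ≤ x → x ≤ N → 0 ≤ α * Real.log x ∧ α * Real.log x ≤ T := by
    intro x h1 h2
    constructor
    · exact mul_nonneg hα0.le (Real.log_nonneg h1)
    · rw [hTdef]
      have : Real.log x ≤ Real.log N := Real.log_le_log (by linarith) h2
      nlinarith
  -- derivative of H is h on [1,N]
  have hderivH : ∀ x ∈ Set.Icc (1:ℝ) N, HasDerivAt H (h x) x := by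
    intro x hx
    rw [hh x hx]
    exact hardyH_deriv α (by linarith [hx.1])
  -- continuity of h on [1,N]
  have hlogcont : ContinuousOn (fun x : ℝ => α * Real.log x) (Set.Icc (1:ℝ) N) := by
    apply ContinuousOn.mul continuousOn_const
    apply ContinuousOn.log continuousOn_id
    intro x hx; exact ne_of_gt (by linarith [hx.1] : (0:ℝ) < x)
  have hhcont : ContinuousOn h (Set.Icc (1:ℝ) N) := by
    apply ContinuousOn.congr ?_ hh
    apply ContinuousOn.mul
    · apply ContinuousOn.rpow_const continuousOn_id
      intro x hx; exact Or.inl (ne_of_gt (by linarith [hx.1] : (0:ℝ) < x))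
    · exact (ContinuousOn.mul continuousOn_const
        (Real.continuous_cos.comp_continuousOn hlogcont)).add
        (Real.continuous_sin.comp_continuousOn hlogcont)
  have hHcont : ContinuousOn H (Set.Icc (1:ℝ) N) := by
    apply ContinuousOn.mul
    · exact ContinuousOn.mul continuousOn_const Real.continuous_sqrt.continuousOn
    · exact Real.continuous_sin.comp_continuousOn hlogcont
  -- FTC on subintervals
  have hFTC : ∀ u v : ℝ, 1 ≤ u → u ≤ v → v ≤ N → (∫ x in u..v, h x) = H v - H u := by
    intro u v h1 h2 h3
    apply intervalIntegral.integral_eq_sub_of_hasDerivAt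
    · intro x hx
      rw [Set.uIcc_of_le h2] at hx
      exact hderivH x ⟨le_trans h1 hx.1, le_trans hx.2 h3⟩
    · apply (hhcont.mono ?_).intervalIntegrable
      rw [Set.uIcc_of_le h2]
      intro x hx
      exact ⟨le_trans h1 hx.1, le_trans hx.2 h3⟩
  -- h nonneg on [1,N]
  have hhnn : ∀ x ∈ Set.Icc (1:ℝ) N, 0 ≤ h x := by
    intro x hx
    rw [hh x hx]
    obtain ⟨hm1, hm2⟩ := hmemT x hx.1 hx.2
    have hp := hardy_pos α T hα0 hT1 hT2 hroot hm1 hm2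
    have : (0:ℝ) ≤ x ^ (-(1:ℝ)/2) := Real.rpow_nonneg (by linarith [hx.1]) _
    positivity
  -- H nonneg and monotone-ish
  have hHnn : ∀ x : ℝ, 1 ≤ x → x ≤ N → 0 ≤ H x := by
    intro x h1 h2
    obtain ⟨hm1, hm2⟩ := hmemT x h1 h2
    have hs : 0 ≤ Real.sin (α * Real.log x) :=
      Real.sin_nonneg_of_nonneg_of_le_pi hm1 (by linarith)
    have : (0:ℝ) ≤ Real.sqrt x := Real.sqrt_nonneg x
    rw [hHdef]; positivity
  have hHmono : ∀ u v : ℝ, 1 ≤ u → u ≤ v → v ≤ N → H u ≤ H v := by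
    intro u v h1 h2 h3
    have he := hFTC u v h1 h2 h3
    have h0 : 0 ≤ ∫ x in u..v, h x :=
      intervalIntegral.integral_nonneg h2
        (fun x hx => hhnn x ⟨le_trans h1 hx.1, le_trans hx.2 h3⟩)
    linarith [he ▸ h0]
  -- a k in terms of H
  have ha' : ∀ k : ℕ, 1 ≤ k → k ≤ n → a k = H ((k:ℝ)+1) - H (k:ℝ) := by
    intro k h1 h2
    have hk1 : (1:ℝ) ≤ (k:ℝ) := by exact_mod_cast h1
    have hkN : (k:ℝ)+1 ≤ N := by
      have : (k:ℝ) ≤ (n:ℝ) := by exact_mod_cast h2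
      rw [hNdef]; linarith
    rw [ha k h1 h2, hFTC (k:ℝ) ((k:ℝ)+1) hk1 (by linarith) hkN]
  have hH1 : H 1 = 0 := by simp [hHdef]
  -- partial sums telescope
  have hS : ∀ k : ℕ, 1 ≤ k → k ≤ n → ∑ j ∈ Finset.Icc 1 k, a j = H ((k:ℝ)+1) := by
    intro k h1 h2
    have hc : ∀ j ∈ Finset.Icc 1 k, a j = H ((j:ℝ)+1) - H (j:ℝ) := by
      intro j hj
      rw [Finset.mem_Icc] at hj
      exact ha' j hj.1 (le_trans hj.2 h2)
    rw [Finset.sum_congr rfl hc]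
    have htel := Finset.sum_range_sub (fun i : ℕ => H ((i:ℝ)+1)) k
    rw [← Finset.Ico_add_one_right_eq_Icc, Finset.sum_Ico_eq_sum_range]
    simp only [Nat.add_sub_cancel]
    have hcongr : ∀ i ∈ Finset.range k, (H (((1+i:ℕ):ℝ)+1) - H ((1+i:ℕ):ℝ))
        = H (((i+1:ℕ):ℝ)+1) - H (((i:ℕ):ℝ)+1) := by
      intro i _; push_cast; ring_nf
    rw [Finset.sum_congr rfl hcongr, htel]
    norm_num [hH1]
  -- continuity of (H x / x)^2
  have hQcont : ContinuousOn (fun x => (H x / x)^2) (Set.Icc (1:ℝ) N) := by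
    apply ContinuousOn.pow
    exact hHcont.div continuousOn_id (fun x hx => ne_of_gt (by linarith [hx.1] : (0:ℝ) < x))
  have hq2cont : ContinuousOn (fun x => (h x)^2) (Set.Icc (1:ℝ) N) := hhcont.pow 2
  -- per-k integral bound
  have hkN' : ∀ k : ℕ, 1 ≤ k → k ≤ n → (1:ℝ) ≤ (k:ℝ) ∧ (k:ℝ)+1 ≤ N := by
    intro k h1 h2
    refine ⟨by exact_mod_cast h1, ?_⟩
    have : (k:ℝ) ≤ (n:ℝ) := by exact_mod_cast h2
    rw [hNdef]; linarith
  have hkey : ∀ k : ℕ, 1 ≤ k → k ≤ n →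
      (∫ x in (k:ℝ)..((k:ℝ)+1), (H x / x)^2) ≤ ((1/(k:ℝ)) * H ((k:ℝ)+1))^2 := by
    intro k h1 h2
    obtain ⟨hk1, hkN⟩ := hkN' k h1 h2
    have hsub : Set.Icc (k:ℝ) ((k:ℝ)+1) ⊆ Set.Icc (1:ℝ) N := by
      intro x hx; exact ⟨le_trans hk1 hx.1, le_trans hx.2 hkN⟩
    have hle : ∀ x ∈ Set.Icc (k:ℝ) ((k:ℝ)+1), (H x / x)^2 ≤ ((1/(k:ℝ)) * H ((k:ℝ)+1))^2 := by
      intro x hx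
      have hx1 : 1 ≤ x := le_trans hk1 hx.1
      have hxN : x ≤ N := le_trans hx.2 hkN
      have h0H : 0 ≤ H x := hHnn x hx1 hxN
      have hHle : H x ≤ H ((k:ℝ)+1) := hHmono x ((k:ℝ)+1) hx1 hx.2 hkN
      have hdiv : H x / x ≤ H ((k:ℝ)+1) / (k:ℝ) :=
        div_le_div₀ (by linarith) hHle (by linarith) hx.1
      have h0q : 0 ≤ H x / x := div_nonneg h0H (by linarith)
      calc (H x / x)^2 ≤ (H ((k:ℝ)+1) / (k:ℝ))^2 := pow_le_pow_left₀ h0q hdiv 2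
        _ = ((1/(k:ℝ)) * H ((k:ℝ)+1))^2 := by ring
    have hintq : IntervalIntegrable (fun x => (H x / x)^2) volume (k:ℝ) ((k:ℝ)+1) := by
      apply ((hQcont.mono hsub).mono ?_).intervalIntegrable
      rw [Set.uIcc_of_le (by linarith : (k:ℝ) ≤ (k:ℝ)+1)]
    calc (∫ x in (k:ℝ)..((k:ℝ)+1), (H x / x)^2)
        ≤ ∫ _x in (k:ℝ)..((k:ℝ)+1), ((1/(k:ℝ)) * H ((k:ℝ)+1))^2 := by
          apply intervalIntegral.integral_mono_on (by linarith) hintq intervalIntegrable_const hle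
      _ = ((1/(k:ℝ)) * H ((k:ℝ)+1))^2 := by
          rw [intervalIntegral.integral_const]; simp
  -- adjacency sums
  have hadj : ∀ f : ℝ → ℝ, ContinuousOn f (Set.Icc (1:ℝ) N) →
      ∑ k ∈ Finset.Icc 1 n, (∫ x in (k:ℝ)..((k:ℝ)+1), f x) = ∫ x in (1:ℝ)..N, f x := by
    intro f hf
    have hint : ∀ i : ℕ, i < n → IntervalIntegrable f volume ((i:ℝ)+1) (((i:ℕ)+1:ℝ)+1) := by
      intro i hi
      apply ((hf.mono ?_)).intervalIntegrable
      rw [Set.uIcc_of_le (by push_cast; linarith)]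
      intro x hx
      have hi' : ((i:ℝ)+1)+1 ≤ N := by
        rw [hNdef]
        have : (i:ℝ)+1 ≤ (n:ℝ) := by exact_mod_cast hi
        linarith
      constructor
      · calc (1:ℝ) ≤ (i:ℝ)+1 := by
              have : (0:ℝ) ≤ (i:ℝ) := Nat.cast_nonneg i
              linarith
          _ ≤ x := hx.1
      · calc x ≤ ((i:ℕ)+1:ℝ)+1 := hx.2
          _ ≤ N := by push_cast; push_cast at hi'; linarith
    have hadj' := intervalIntegral.sum_integral_adjacent_intervals
      (a := fun i : ℕ => (i:ℝ)+1) (μ := volume) (f := f) (n := n) ?_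
    · rw [← Finset.Ico_add_one_right_eq_Icc, Finset.sum_Ico_eq_sum_range]
      simp only [Nat.add_sub_cancel]
      have hcongr : ∀ i ∈ Finset.range n, (∫ x in (((1+i:ℕ)):ℝ)..(((1+i:ℕ)):ℝ)+1, f x)
          = ∫ x in ((i:ℝ)+1)..(((i+1:ℕ)):ℝ)+1, f x := by
        intro i _; push_cast; ring_nf
      rw [Finset.sum_congr rfl hcongr, hadj']
      norm_num [hNdef]
    · intro i hi
      have := hint i hi
      push_cast at this ⊢
      convert this using 2
  -- Cauchy-Schwarz per k
  have hcs : ∀ k ∈ Finset.Icc 1 n, (a k)^2 ≤ ∫ x in (k:ℝ)..((k:ℝ)+1), (h x)^2 := by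
    intro k hk
    rw [Finset.mem_Icc] at hk
    obtain ⟨hk1, hkN⟩ := hkN' k hk.1 hk.2
    have hsub : Set.Icc (k:ℝ) ((k:ℝ)+1) ⊆ Set.Icc (1:ℝ) N := by
      intro x hx; exact ⟨le_trans hk1 hx.1, le_trans hx.2 hkN⟩
    rw [ha k hk.1 hk.2]
    exact hardy_cs h (k:ℝ) (hhcont.mono hsub)
  -- trig identities at T
  have hsinT : Real.sin T = -(2*α) * Real.cos T := hardy_sinT α T hT1 hT2 hroot
  have hαne : α ≠ 0 := hα0.ne'
  have h4ne : (1:ℝ) + 4*α^2 ≠ 0 := by positivity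
  -- FTC for G
  have hGN : (∫ x in (1:ℝ)..N, (H x / x)^2)
      = 2 * Real.log N - Real.sin (2*(α * Real.log N)) / α := by
    have := intervalIntegral.integral_eq_sub_of_hasDerivAt
      (f := fun y => 2 * Real.log y - Real.sin (2 * (α * Real.log y)) / α)
      (f' := fun x => (H x / x)^2) (a := (1:ℝ)) (b := N) ?_ ?_
    · rw [this]; norm_num
    · intro x hx
      rw [Set.uIcc_of_le (by linarith : (1:ℝ) ≤ N)] at hx
      have hx0 : (0:ℝ) < x := by linarith [hx.1]
      have heq : (H x / x)^2 = 4 * Real.sin (α * Real.log x) ^ 2 / x := by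
        rw [hHdef]
        have : Real.sqrt x ^ 2 = x := Real.sq_sqrt hx0.le
        field_simp
        linear_combination (4 * Real.sin (α*Real.log x)^2) * this
      show HasDerivAt _ ((H x / x)^2) x
      rw [heq]
      exact hardyG_deriv α hαne hx0
    · exact (hQcont.mono (by rw [Set.uIcc_of_le (by linarith : (1:ℝ) ≤ N)])).intervalIntegrable
  -- FTC for F
  have hFN : (∫ x in (1:ℝ)..N, (h x)^2)
      = ((1 + 4*α^2) * (α * Real.log N) / 2
        + (4*α^2 - 1) * Real.sin (2 * (α * Real.log N)) / 4
        + 2 * α * Real.sin (α * Real.log N) ^ 2) / α := by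
    have := intervalIntegral.integral_eq_sub_of_hasDerivAt
      (f := fun y => ((1 + 4*α^2) * (α * Real.log y) / 2
        + (4*α^2 - 1) * Real.sin (2 * (α * Real.log y)) / 4
        + 2 * α * Real.sin (α * Real.log y) ^ 2) / α)
      (f' := fun x => (h x)^2) (a := (1:ℝ)) (b := N) ?_ ?_
    · rw [this]; norm_num
    · intro x hx
      rw [Set.uIcc_of_le (by linarith : (1:ℝ) ≤ N)] at hx
      have hx0 : (0:ℝ) < x := by linarith [hx.1]
      have heq : (h x)^2
          = (2 * α * Real.cos (α * Real.log x) + Real.sin (α * Real.log x)) ^ 2 / x := by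
        rw [hh x hx, mul_pow, hardy_rpow_half hx0]
        have hs : Real.sqrt x ^ 2 = x := Real.sq_sqrt hx0.le
        rw [div_pow, one_pow, hs]
        ring
      show HasDerivAt _ ((h x)^2) x
      rw [heq]
      exact hardyF_deriv α hαne hx0
    · exact (hq2cont.mono (by rw [Set.uIcc_of_le (by linarith : (1:ℝ) ≤ N)])).intervalIntegrable
  -- the key algebraic identity
  have halg : 2 * Real.log N - Real.sin (2*(α * Real.log N)) / α
      = 4 / (1 + 4*α^2) * (((1 + 4*α^2) * (α * Real.log N) / 2
        + (4*α^2 - 1) * Real.sin (2 * (α * Real.log N)) / 4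
        + 2 * α * Real.sin (α * Real.log N) ^ 2) / α) := by
    rw [Real.sin_two_mul]
    rw [show α * Real.log N = T from rfl, hsinT]
    field_simp
    ring
  -- put everything together
  rw [ge_iff_le]
  have hc0 : (0:ℝ) ≤ 4 / (1 + 4*α^2) := by positivity
  calc (4 / (1 + 4 * α ^ 2)) * ∑ k ∈ Finset.Icc 1 n, (a k)^2
      ≤ (4 / (1 + 4 * α ^ 2)) * ∑ k ∈ Finset.Icc 1 n, (∫ x in (k:ℝ)..((k:ℝ)+1), (h x)^2) :=
        mul_le_mul_of_nonneg_left (Finset.sum_le_sum hcs) hc0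
    _ = (4 / (1 + 4 * α ^ 2)) * ∫ x in (1:ℝ)..N, (h x)^2 := by
        rw [hadj (fun x => (h x)^2) hq2cont]
    _ = ∫ x in (1:ℝ)..N, (H x / x)^2 := by
        rw [hGN, hFN, halg]
    _ = ∑ k ∈ Finset.Icc 1 n, (∫ x in (k:ℝ)..((k:ℝ)+1), (H x / x)^2) :=
        (hadj (fun x => (H x / x)^2) hQcont).symm
    _ ≤ ∑ k ∈ Finset.Icc 1 n, ((1/(k:ℝ)) * H ((k:ℝ)+1))^2 := by
        apply Finset.sum_le_sum
        intro k hk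
        rw [Finset.mem_Icc] at hk
        exact hkey k hk.1 hk.2
    _ = ∑ k ∈ Finset.Icc 1 n, ((1 / (k : ℝ)) * ∑ j ∈ Finset.Icc 1 k, a j) ^ 2 := by
        apply Finset.sum_congr rfl
        intro k hk
        rw [Finset.mem_Icc] at hk
        rw [hS k hk.1 hk.2]
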